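/- arXiv:2006.09903 — 3 statements merged into one kernel-verified Lean document; each statement's English description precedes it below -/
import Mathlib

section
/- For all j_c > 0, γ > 0, the map Λ_γ : ℝ³ → ℝ³ is monotone: (Λ_γ(w₁) − Λ_γ(w₂)) · (w₁ − w₂) ≥ 0 for all w₁, w₂ ∈ ℝ³, where · denotes the Euclidean inner product. -/
open scoped RealInnerProductSpace Topology

/-- Moreau-Yosida regularization of the max-function `x ↦ max{1, x}`. -/
noncomputable def maxReg (γ x : ℝ) : ℝ :=
  if 1 / (2 * γ) ≤ x - 1 then x
  else if x - 1 ≤ -(1 / (2 * γ)) then 1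
  else 1 + γ / 2 * (x - 1 + 1 / (2 * γ)) ^ 2

abbrev E3 := EuclideanSpace ℝ (Fin 3)

/-- The regularized dual-variable map `Λ_γ(e) = j_c γ e / max_γ{1, γ|e|}`. -/
noncomputable def Lam (jc γ : ℝ) (e : E3) : E3 :=
  (jc * γ / maxReg γ (γ * ‖e‖)) • e

lemma maxReg_ge_one (γ : ℝ) (hγ : 0 < γ) (x : ℝ) : 1 ≤ maxReg γ x := by
  have hc : 0 < 1 / (2 * γ) := by positivity
  unfold maxReg
  split_ifs with h1 h2
  · linarith
  · linarith
  · nlinarith [sq_nonneg (x - 1 + 1 / (2 * γ))]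

lemma maxReg_ge_self (γ : ℝ) (hγ : 0 < γ) (x : ℝ) : x ≤ maxReg γ x := by
  have hc : 0 < 1 / (2 * γ) := by positivity
  have hgc : γ * (1 / (2 * γ)) = 1 / 2 := by field_simp
  unfold maxReg
  split_ifs with h1 h2
  · linarith
  · linarith
  · nlinarith [sq_nonneg (x - 1 - 1 / (2 * γ))]

lemma maxReg_lipschitz (γ : ℝ) (hγ : 0 < γ) {x y : ℝ} (hxy : x ≤ y) :
    maxReg γ y - maxReg γ x ≤ y - x := by
  have hc : 0 < 1 / (2 * γ) := by positivity
  have hgc : γ * (1 / (2 * γ)) = 1 / 2 := by field_simp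
  unfold maxReg
  split_ifs with hy1 hx1 hx2 hy2 hx1 hx2 hy2 hx1 hx2 <;>
    nlinarith [sq_nonneg (x - 1 - 1 / (2 * γ)), sq_nonneg (y - 1 - 1 / (2 * γ)),
      mul_nonneg (sub_nonneg.2 hxy) hγ.le, sq_nonneg (x - y),
      mul_nonneg (mul_nonneg (sub_nonneg.2 hxy) hγ.le) hc.le]

lemma maxReg_key (γ : ℝ) (hγ : 0 < γ) {x y : ℝ} (hx : 0 ≤ x) (hxy : x ≤ y) :
    x * maxReg γ y ≤ y * maxReg γ x := by
  have h1 := maxReg_lipschitz γ hγ hxy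
  have h2 := maxReg_ge_self γ hγ x
  nlinarith [mul_nonneg (sub_nonneg.2 hxy) (sub_nonneg.2 h2)]

/-- Monotonicity of `Λ_γ`: the Euclidean inner product of the increment of `Λ_γ`
with the increment of the argument is nonnegative. -/
theorem Lam_monotone (jc γ : ℝ) (hjc : 0 < jc) (hγ : 0 < γ) (w₁ w₂ : E3) :
    0 ≤ ⟪Lam jc γ w₁ - Lam jc γ w₂, w₁ - w₂⟫ := by
  have hm₁ : (1:ℝ) ≤ maxReg γ (γ * ‖w₁‖) := maxReg_ge_one γ hγ _
  have hm₂ : (1:ℝ) ≤ maxReg γ (γ * ‖w₂‖) := maxReg_ge_one γ hγ _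
  have hm₁' : (0:ℝ) < maxReg γ (γ * ‖w₁‖) := by linarith
  have hm₂' : (0:ℝ) < maxReg γ (γ * ‖w₂‖) := by linarith
  set m₁ := maxReg γ (γ * ‖w₁‖)
  set m₂ := maxReg γ (γ * ‖w₂‖)
  set a₁ := jc * γ / m₁ with ha₁
  set a₂ := jc * γ / m₂ with ha₂
  have ha₁0 : 0 ≤ a₁ := by positivity
  have ha₂0 : 0 ≤ a₂ := by positivity
  have hexp : ⟪Lam jc γ w₁ - Lam jc γ w₂, w₁ - w₂⟫
      = a₁ * ‖w₁‖ ^ 2 + a₂ * ‖w₂‖ ^ 2 - (a₁ + a₂) * ⟪w₁, w₂⟫ := by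
    simp only [Lam, inner_sub_left, inner_sub_right, real_inner_smul_left,
      real_inner_self_eq_norm_sq, real_inner_comm w₂ w₁]
    ring
  have hip : ⟪w₁, w₂⟫ ≤ ‖w₁‖ * ‖w₂‖ := real_inner_le_norm w₁ w₂
  have hmono : 0 ≤ (a₁ * ‖w₁‖ - a₂ * ‖w₂‖) * (‖w₁‖ - ‖w₂‖) := by
    rcases le_total ‖w₁‖ ‖w₂‖ with h | h
    · have hk := maxReg_key γ hγ (by positivity : 0 ≤ γ * ‖w₁‖)
        (by nlinarith : γ * ‖w₁‖ ≤ γ * ‖w₂‖)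
      have : a₁ * ‖w₁‖ ≤ a₂ * ‖w₂‖ := by
        rw [ha₁, ha₂, div_mul_eq_mul_div, div_mul_eq_mul_div, div_le_div_iff₀ hm₁' hm₂']
        nlinarith
      nlinarith [mul_nonneg (by linarith : (0:ℝ) ≤ a₂ * ‖w₂‖ - a₁ * ‖w₁‖) (by linarith : (0:ℝ) ≤ ‖w₂‖ - ‖w₁‖)]
    · have hk := maxReg_key γ hγ (by positivity : 0 ≤ γ * ‖w₂‖)
        (by nlinarith : γ * ‖w₂‖ ≤ γ * ‖w₁‖)
      have : a₂ * ‖w₂‖ ≤ a₁ * ‖w₁‖ := by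
        rw [ha₁, ha₂, div_mul_eq_mul_div, div_mul_eq_mul_div, div_le_div_iff₀ hm₂' hm₁']
        nlinarith
      exact mul_nonneg (by linarith) (by linarith)
  rw [hexp]
  nlinarith [mul_le_mul_of_nonneg_left hip (by linarith : (0:ℝ) ≤ a₁ + a₂)]
end

section
/- For all j_c > 0, γ > 0, and every e ∈ ℝ³ with e ≠ 0, the map Λ_γ : ℝ³ → ℝ³ is Fréchet differentiable at e, with derivative given by Λ_γ'(e)w = j_c γ w / max_γ{1, γ|e|} − γ c_γ(e) (e·w) Λ_γ(e) / (max_γ{1, γ|e|} |e|) for every direction w ∈ ℝ³. -/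
open scoped RealInnerProductSpace Topology

/-- The coefficient `c_γ(e)` arising in the derivative of `Λ_γ`. -/
noncomputable def cReg (γ : ℝ) (e : E3) : ℝ :=
  if 1 + 1 / (2 * γ) ≤ γ * ‖e‖ then 1
  else if |γ * ‖e‖ - 1| < 1 / (2 * γ) then γ * (γ * ‖e‖ - 1 + 1 / (2 * γ))
  else 0

/-- Pointwise derivative of `maxReg γ`. -/
noncomputable def dmax (γ x : ℝ) : ℝ :=
  if 1 / (2 * γ) ≤ x - 1 then 1
  else if x - 1 ≤ -(1 / (2 * γ)) then 0
  else γ * (x - 1 + 1 / (2 * γ))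

lemma maxReg_pos {γ : ℝ} (hγ : 0 < γ) (x : ℝ) : 0 < maxReg γ x := by
  have hδ : 0 < 1 / (2 * γ) := by positivity
  unfold maxReg
  split_ifs with h1 h2
  · linarith
  · norm_num
  · nlinarith [sq_nonneg (x - 1 + 1 / (2 * γ))]

/-- the quadratic middle branch -/
noncomputable def qmid (γ x : ℝ) : ℝ := 1 + γ / 2 * (x - 1 + 1 / (2 * γ)) ^ 2

lemma qmid_hasDerivAt (γ x : ℝ) :
    HasDerivAt (qmid γ) (γ * (x - 1 + 1 / (2 * γ))) x := by
  have h1 : HasDerivAt (fun y : ℝ => y - 1 + 1 / (2 * γ)) 1 x := by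
    simpa using ((hasDerivAt_id x).sub_const 1).add_const (1 / (2 * γ))
  have h2 := ((h1.pow 2).const_mul (γ / 2)).const_add 1
  refine h2.congr_deriv ?_
  norm_num
  ring

lemma maxReg_eq_qmid {γ : ℝ} (hγ : 0 < γ) {y : ℝ}
    (hlo : 1 - 1 / (2 * γ) < y) (hhi : y ≤ 1 + 1 / (2 * γ)) :
    maxReg γ y = qmid γ y := by
  unfold maxReg qmid
  rcases eq_or_lt_of_le hhi with heq | hlt
  · rw [if_pos (by linarith)]
    subst heq
    field_simp
    ring
  · rw [if_neg (by linarith), if_neg (by linarith)]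

lemma maxReg_eq_qmid' {γ : ℝ} (hγ : 0 < γ) {y : ℝ}
    (hlo : 1 - 1 / (2 * γ) ≤ y) (hhi : y < 1 + 1 / (2 * γ)) :
    maxReg γ y = qmid γ y := by
  unfold maxReg qmid
  rcases eq_or_lt_of_le hlo with heq | hlt
  · rw [if_neg (by linarith), if_pos (by linarith)]
    rw [← heq]
    ring
  · rw [if_neg (by linarith), if_neg (by linarith)]

lemma maxReg_hasDerivAt {γ : ℝ} (hγ : 0 < γ) (x : ℝ) :
    HasDerivAt (maxReg γ) (dmax γ x) x := by
  have hδ : 0 < 1 / (2 * γ) := by positivity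
  set δ := 1 / (2 * γ) with hδdef
  rcases lt_trichotomy x (1 + δ) with hb | hb | hb
  · rcases lt_trichotomy x (1 - δ) with ha | ha | ha
    · -- constant branch
      have hd : dmax γ x = 0 := by
        unfold dmax; rw [if_neg (by linarith), if_pos (by linarith)]
      rw [hd]
      have hev : maxReg γ =ᶠ[𝓝 x] fun _ => 1 := by
        filter_upwards [Iio_mem_nhds (show x < 1 - δ from ha)] with y hy
        unfold maxReg
        rw [if_neg (by simp only [Set.mem_Iio] at hy; linarith),
          if_pos (by simp only [Set.mem_Iio] at hy; linarith)]
      exact (hasDerivAt_const x (1 : ℝ)).congr_of_eventuallyEq hev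
    · -- boundary point x = 1 - δ
      have hd : dmax γ x = 0 := by
        unfold dmax; rw [if_neg (by linarith), if_pos (by linarith)]
      rw [hd]
      rw [← hasDerivWithinAt_univ, ← Set.Iic_union_Ici (a := x)]
      apply HasDerivWithinAt.union
      · -- left: constant
        apply ((hasDerivAt_const x (1 : ℝ)).hasDerivWithinAt).congr
        · intro y hy
          simp only [Set.mem_Iic] at hy
          unfold maxReg
          rw [if_neg (by linarith), if_pos (by linarith)]
        · unfold maxReg
          rw [if_neg (by linarith), if_pos (by linarith)]
      · -- right: quadratic
        have hq : HasDerivWithinAt (qmid γ) 0 (Set.Ici x) x := by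
          have := (qmid_hasDerivAt γ x).hasDerivWithinAt (s := Set.Ici x)
          have h0 : γ * (x - 1 + 1 / (2 * γ)) = 0 := by rw [ha, hδdef]; ring
          rwa [h0] at this
        apply hq.congr_of_eventuallyEq_of_mem
        · filter_upwards [eventually_nhdsWithin_of_eventually_nhds
            (Iio_mem_nhds (show x < 1 + δ from by linarith)),
            self_mem_nhdsWithin] with y hy1 hy2
          simp only [Set.mem_Ici] at hy2
          exact maxReg_eq_qmid' hγ (by linarith) hy1
        · exact Set.self_mem_Ici
    · -- middle open interval
      have hd : dmax γ x = γ * (x - 1 + 1 / (2 * γ)) := by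
        unfold dmax; rw [if_neg (by linarith), if_neg (by linarith)]
      rw [hd]
      have hev : maxReg γ =ᶠ[𝓝 x] qmid γ := by
        filter_upwards [Ioo_mem_nhds ha hb] with y hy
        exact maxReg_eq_qmid hγ hy.1 (le_of_lt hy.2)
      exact (qmid_hasDerivAt γ x).congr_of_eventuallyEq hev
  · -- boundary point x = 1 + δ
    have hd : dmax γ x = 1 := by
      unfold dmax; rw [if_pos (by linarith)]
    rw [hd]
    rw [← hasDerivWithinAt_univ, ← Set.Iic_union_Ici (a := x)]
    apply HasDerivWithinAt.union
    · -- left: quadratic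
      have hq : HasDerivWithinAt (qmid γ) 1 (Set.Iic x) x := by
        have := (qmid_hasDerivAt γ x).hasDerivWithinAt (s := Set.Iic x)
        rw [hb] at this
        have h1 : γ * (1 + δ - 1 + 1 / (2 * γ)) = 1 := by
          rw [hδdef]; field_simp; ring
        rw [h1] at this
        rwa [← hb] at this
      apply hq.congr_of_eventuallyEq_of_mem
      · filter_upwards [eventually_nhdsWithin_of_eventually_nhds
          (Ioi_mem_nhds (show 1 - δ < x from by linarith)),
          self_mem_nhdsWithin] with y hy1 hy2
        simp only [Set.mem_Iic] at hy2
        exact maxReg_eq_qmid hγ hy1 (by linarith)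
      · exact Set.self_mem_Iic
    · -- right: identity
      apply ((hasDerivAt_id x).hasDerivWithinAt).congr
      · intro y hy
        simp only [Set.mem_Ici] at hy
        unfold maxReg
        rw [if_pos (by linarith)]
        rfl
      · unfold maxReg
        rw [if_pos (by linarith)]
        rfl
  · -- identity branch
    have hd : dmax γ x = 1 := by
      unfold dmax; rw [if_pos (by linarith)]
    rw [hd]
    have hev : maxReg γ =ᶠ[𝓝 x] id := by
      filter_upwards [Ioi_mem_nhds (show 1 + δ < x from hb)] with y hy
      simp only [Set.mem_Ioi] at hy
      unfold maxReg
      rw [if_pos (by linarith)]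
      rfl
    exact (hasDerivAt_id x).congr_of_eventuallyEq hev

lemma cReg_eq_dmax {γ : ℝ} (hγ : 0 < γ) (e : E3) :
    cReg γ e = dmax γ (γ * ‖e‖) := by
  have hδ : 0 < 1 / (2 * γ) := by positivity
  unfold cReg dmax
  set x := γ * ‖e‖ with hxdef
  by_cases h1 : 1 / (2 * γ) ≤ x - 1
  · rw [if_pos (by linarith), if_pos h1]
  · rw [if_neg (by linarith), if_neg h1]
    push_neg at h1
    by_cases h2 : x - 1 ≤ -(1 / (2 * γ))
    · rw [if_neg (by rw [abs_lt]; push_neg; intro h; linarith), if_pos h2]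
    · push_neg at h2
      rw [if_pos (by rw [abs_lt]; constructor <;> linarith), if_neg (by linarith)]

lemma hasFDerivAt_norm_e3 (e : E3) (he : e ≠ 0) :
    HasFDerivAt (fun v : E3 => ‖v‖) (‖e‖⁻¹ • innerSL ℝ e) e := by
  have hne : ‖e‖ ≠ 0 := norm_ne_zero_iff.mpr he
  have h2 : HasFDerivAt (fun v : E3 => ‖v‖ ^ 2) (2 • innerSL ℝ e) e := by
    simpa using (hasFDerivAt_id e).norm_sq
  have hsq : (‖e‖ : ℝ) ^ 2 ≠ 0 := pow_ne_zero 2 hne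
  have h3 := (Real.hasDerivAt_sqrt hsq).comp_hasFDerivAt e h2
  have heq : (Real.sqrt ∘ fun v : E3 => ‖v‖ ^ 2) = fun v : E3 => ‖v‖ := by
    funext v
    simp [Function.comp, Real.sqrt_sq_eq_abs]
  rw [heq] at h3
  refine h3.congr_fderiv ?_
  ext w
  simp only [ContinuousLinearMap.smul_apply, innerSL_apply_apply, smul_eq_mul,
    Real.sqrt_sq_eq_abs, abs_norm]
  field_simp
  ring

/-- For e ≠ 0, `Λ_γ` is Fréchet differentiable at e with derivative
`w ↦ j_c γ w / max_γ{1, γ‖e‖} - γ c_γ(e) ⟪e, w⟫ Λ_γ(e) / (max_γ{1, γ‖e‖} ‖e‖)`. -/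
theorem Lam_fderiv (jc γ : ℝ) (hjc : 0 < jc) (hγ : 0 < γ) (e : E3) (he : e ≠ 0) :
    DifferentiableAt ℝ (Lam jc γ) e ∧
    ∀ w : E3,
      fderiv ℝ (Lam jc γ) e w =
        (jc * γ / maxReg γ (γ * ‖e‖)) • w
          - (γ * cReg γ e * ⟪e, w⟫ / (maxReg γ (γ * ‖e‖) * ‖e‖)) • Lam jc γ e := by
  have hne : ‖e‖ ≠ 0 := norm_ne_zero_iff.mpr he
  set x₀ := γ * ‖e‖ with hx₀
  set M := maxReg γ x₀ with hM
  have hM0 : M ≠ 0 := (maxReg_pos hγ x₀).ne'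
  set c := dmax γ x₀ with hc
  -- inner map v ↦ γ‖v‖
  have hN := hasFDerivAt_norm_e3 e he
  have hγN : HasFDerivAt (fun v : E3 => γ * ‖v‖) (γ • (‖e‖⁻¹ • innerSL ℝ e)) e :=
    hN.const_mul γ
  -- scalar map h t = jc*γ / maxReg γ t
  have hh : HasDerivAt (fun t : ℝ => jc * γ / maxReg γ t)
      (jc * γ * (-c / M ^ 2)) x₀ := by
    have hinv : HasDerivAt (fun t : ℝ => (maxReg γ t)⁻¹) (-c / M ^ 2) x₀ :=
      (maxReg_hasDerivAt hγ x₀).inv hM0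
    simpa [div_eq_mul_inv] using hinv.const_mul (jc * γ)
  have hg : HasFDerivAt (fun v : E3 => jc * γ / maxReg γ (γ * ‖v‖))
      ((jc * γ * (-c / M ^ 2)) • (γ • (‖e‖⁻¹ • innerSL ℝ e))) e :=
    hh.comp_hasFDerivAt (h₂ := fun t : ℝ => jc * γ / maxReg γ t) (f := fun v : E3 => γ * ‖v‖) e hγN
  have hLam : HasFDerivAt (Lam jc γ)
      ((jc * γ / M) • ContinuousLinearMap.id ℝ E3 +
        ((jc * γ * (-c / M ^ 2)) • (γ • (‖e‖⁻¹ • innerSL ℝ e))).smulRight e) e := by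
    have := hg.smul (hasFDerivAt_id e)
    exact this
  refine ⟨hLam.differentiableAt, fun w => ?_⟩
  rw [hLam.fderiv]
  rw [cReg_eq_dmax hγ e]
  simp only [ContinuousLinearMap.add_apply, ContinuousLinearMap.smul_apply,
    ContinuousLinearMap.coe_id', id_eq, ContinuousLinearMap.smulRight_apply,
    innerSL_apply_apply, smul_eq_mul, Lam, ← hx₀, ← hM, ← hc]
  rw [smul_smul, sub_eq_add_neg, ← neg_smul]
  congr 1
  have hsq : M ^ 2 ≠ 0 := pow_ne_zero 2 hM0
  field_simp
end

section
/- For all j_c > 0 and γ > 1/2, the map Λ_γ : ℝ³ → ℝ³ is continuously differentiable on all of ℝ³; in particular it is Fréchet differentiable at e = 0 with derivative w ↦ j_c γ w. -/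
open scoped RealInnerProductSpace Topology

noncomputable def msq (t : ℝ) : ℝ := (max t 0) ^ 2

lemma hasDerivAt_msq (t : ℝ) : HasDerivAt msq (2 * max t 0) t := by
  rcases lt_trichotomy t 0 with h | h | h
  · have : msq =ᶠ[𝓝 t] fun _ => (0:ℝ) := by
      filter_upwards [eventually_lt_nhds h] with x hx
      simp [msq, max_eq_right hx.le]
    rw [max_eq_right h.le, mul_zero]
    exact (hasDerivAt_const t (0:ℝ)).congr_of_eventuallyEq this
  · subst h
    rw [max_self, mul_zero]
    rw [hasDerivAt_iff_tendsto_slope]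
    apply squeeze_zero_norm (a := fun h => |h|)
    · intro x
      rcases le_or_gt x 0 with hx | hx
      · simp [slope, msq, max_eq_right hx, vsub_eq_sub]
      · have hs : slope msq 0 x = x := by
          rw [slope_def_field]
          have hx2 : msq x = x ^ 2 := by simp [msq, max_eq_left hx.le]
          have h0 : msq 0 = 0 := by simp [msq]
          rw [hx2, h0]
          field_simp
          ring
        rw [hs, Real.norm_eq_abs]
    · exact (continuous_abs.tendsto' 0 0 (by simp)).mono_left nhdsWithin_le_nhds
  · have : msq =ᶠ[𝓝 t] fun x => x ^ 2 := by
      filter_upwards [eventually_gt_nhds h] with x hx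
      simp [msq, max_eq_left hx.le]
    rw [max_eq_left h.le]
    have h2 : HasDerivAt (fun x : ℝ => x ^ 2) (2 * t) t := by
      simpa using (hasDerivAt_pow 2 t)
    exact h2.congr_of_eventuallyEq this

lemma contDiff_msq : ContDiff ℝ 1 msq := by
  rw [contDiff_one_iff_deriv]
  constructor
  · exact fun t => (hasDerivAt_msq t).differentiableAt
  · have : deriv msq = fun t => 2 * max t 0 := funext fun t => (hasDerivAt_msq t).deriv
    rw [this]
    exact continuous_const.mul (continuous_id.max continuous_const)

lemma maxReg_eq (γ : ℝ) (hγ : 0 < γ) (x : ℝ) :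
    maxReg γ x = 1 + 1 / (2 * γ) * (msq (γ * (x - 1) + 1 / 2) - msq (γ * (x - 1) - 1 / 2)) := by
  have hγ' : γ ≠ 0 := ne_of_gt hγ
  unfold maxReg msq
  split_ifs with h1 h2
  · have key : γ * (1 / (2 * γ)) = 1 / 2 := by field_simp
    have hs : 1 / 2 ≤ γ * (x - 1) := by
      nlinarith [mul_le_mul_of_nonneg_left h1 hγ.le]
    rw [max_eq_left (by linarith), max_eq_left (by linarith)]
    field_simp
    ring
  · have key : γ * (1 / (2 * γ)) = 1 / 2 := by field_simp
    have hs : γ * (x - 1) ≤ -(1 / 2) := by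
      nlinarith [mul_le_mul_of_nonneg_left h2 hγ.le]
    rw [max_eq_right (by linarith), max_eq_right (by linarith)]
    ring
  · push_neg at h1 h2
    have key : γ * (1 / (2 * γ)) = 1 / 2 := by field_simp
    have hs1 : γ * (x - 1) < 1 / 2 := by
      nlinarith [mul_lt_mul_of_pos_left h1 hγ]
    have hs2 : -(1 / 2) < γ * (x - 1) := by
      nlinarith [mul_lt_mul_of_pos_left h2 hγ]
    rw [max_eq_left (by linarith), max_eq_right (by linarith)]
    field_simp
    ring

lemma contDiff_maxReg (γ : ℝ) (hγ : 0 < γ) : ContDiff ℝ 1 (maxReg γ) := by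
  have h : maxReg γ = fun x =>
      1 + 1 / (2 * γ) * (msq (γ * (x - 1) + 1 / 2) - msq (γ * (x - 1) - 1 / 2)) :=
    funext (maxReg_eq γ hγ)
  rw [h]
  have haff1 : ContDiff ℝ 1 (fun x : ℝ => γ * (x - 1) + 1 / 2) := by fun_prop
  have haff2 : ContDiff ℝ 1 (fun x : ℝ => γ * (x - 1) - 1 / 2) := by fun_prop
  exact contDiff_const.add (contDiff_const.mul
    ((contDiff_msq.comp haff1).sub (contDiff_msq.comp haff2)))

lemma one_le_maxReg (γ x : ℝ) (hγ : 0 < γ) : 1 ≤ maxReg γ x := by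
  unfold maxReg
  split_ifs with h1 h2
  · have : 0 < 1 / (2 * γ) := by positivity
    linarith
  · exact le_rfl
  · have := mul_nonneg (by positivity : (0:ℝ) ≤ γ / 2) (sq_nonneg (x - 1 + 1 / (2 * γ)))
    linarith

lemma maxReg_near_zero (γ x : ℝ) (hγ : 1 / 2 < γ) (hx : x ≤ 1 - 1 / (2 * γ)) :
    maxReg γ x = 1 := by
  have hγ0 : (0:ℝ) < γ := by linarith
  have ha : 0 < 1 / (2 * γ) := by positivity
  have ha1 : 1 / (2 * γ) < 1 := by
    rw [div_lt_one (by positivity)]; linarith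
  unfold maxReg
  rw [if_neg (by linarith), if_pos (by linarith)]

/-- For γ > 1/2, `Λ_γ` is continuously differentiable on all of ℝ³; in particular
Fréchet differentiable at 0 with derivative `w ↦ j_c γ w`. -/
theorem Lam_contDiff (jc γ : ℝ) (hjc : 0 < jc) (hγ : 1 / 2 < γ) :
    ContDiff ℝ 1 (Lam jc γ) ∧
    HasFDerivAt (Lam jc γ) ((jc * γ) • ContinuousLinearMap.id ℝ E3) 0 := by
  have hγ0 : (0:ℝ) < γ := by linarith
  have ha1 : 1 / (2 * γ) < 1 := by
    rw [div_lt_one (by positivity)]; linarith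
  set φ : E3 → ℝ := fun e => maxReg γ (γ * ‖e‖) with hφ
  have hφ1 : ∀ e, 1 ≤ φ e := fun e => one_le_maxReg γ _ hγ0
  have hφ0 : ∀ e, φ e ≠ 0 := fun e => by have := hφ1 e; linarith
  -- φ is constant 1 on a ball around 0
  have hr : 0 < (1 - 1 / (2 * γ)) / γ := div_pos (by linarith) hγ0
  have hconst : ∀ e : E3, ‖e‖ < (1 - 1 / (2 * γ)) / γ → φ e = 1 := by
    intro e he
    apply maxReg_near_zero γ _ hγ
    have key : γ * ((1 - 1 / (2 * γ)) / γ) = 1 - 1 / (2 * γ) := by field_simp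
    nlinarith [mul_lt_mul_of_pos_left he hγ0]
  have hφc1 : ContDiff ℝ 1 φ := by
    rw [contDiff_iff_contDiffAt]
    intro e
    rcases eq_or_ne e 0 with rfl | he
    · have : φ =ᶠ[𝓝 (0:E3)] fun _ => (1:ℝ) := by
        have : Metric.ball (0:E3) ((1 - 1 / (2 * γ)) / γ) ∈ 𝓝 (0:E3) :=
          Metric.ball_mem_nhds 0 hr
        filter_upwards [this] with x hx
        exact hconst x (by simpa using hx)
      exact (contDiffAt_const (c := (1:ℝ))).congr_of_eventuallyEq this
    · exact ((contDiff_maxReg γ hγ0).contDiffAt).comp e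
        ((contDiffAt_const.mul ((contDiffAt_norm ℝ he))))
  constructor
  · have : Lam jc γ = fun e => (jc * γ / φ e) • e := rfl
    rw [this]
    exact (ContDiff.div contDiff_const hφc1 hφ0).smul contDiff_id
  · have heq : Lam jc γ =ᶠ[𝓝 (0:E3)] fun e => (jc * γ) • e := by
      have : Metric.ball (0:E3) ((1 - 1 / (2 * γ)) / γ) ∈ 𝓝 (0:E3) :=
        Metric.ball_mem_nhds 0 hr
      filter_upwards [this] with x hx
      have hx1 : maxReg γ (γ * ‖x‖) = 1 := hconst x (by simpa using hx)
      simp [Lam, hx1]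
    have hlin : HasFDerivAt (fun e : E3 => (jc * γ) • e)
        ((jc * γ) • ContinuousLinearMap.id ℝ E3) 0 :=
      ((jc * γ) • ContinuousLinearMap.id ℝ E3).hasFDerivAt
    exact hlin.congr_of_eventuallyEq heq
end
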